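/- arXiv:1309.3384 — 2 statements merged into one kernel-verified Lean document; each statement's English description precedes it below -/
import Mathlib

section
/- Let A be a graded algebra (ungraded or concentrated in degree 0 for simplicity) with a coassociative coproduct δ that is a map of A-bimodules, and suppose δ(1) = Σ 1'⊗1'' = Σ 1''⊗1' (symmetric, degree 0 case). Define on A⊗A (modeling length-zero Hochschild chains tensor coefficients) the product a • b := Σ_{(a)} a''a'b. Then • is associative: (a•b)•c = a•(b•c) for all a,b,c ∈ A. -/
open TensorProduct

section Aux

variable {k A : Type} [Field k] [Ring A] [Algebra k A]

lemma aux_comm_map (f g : A →ₗ[k] A) (t : A ⊗[k] A) :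
    (TensorProduct.comm k A A) ((TensorProduct.map f g) t) =
      (TensorProduct.map g f) ((TensorProduct.comm k A A) t) := by
  induction t using TensorProduct.induction_on with
  | zero => simp
  | tmul x y => simp
  | add x y hx hy => simp [hx, hy]

lemma aux_mul'_map_left (z : A) (t : A ⊗[k] A) :
    LinearMap.mul' k A ((TensorProduct.map (LinearMap.mulLeft k z) LinearMap.id) t) =
      z * LinearMap.mul' k A t := by
  induction t using TensorProduct.induction_on with
  | zero => simp
  | tmul x y => simp [mul_assoc]
  | add x y hx hy => simp [hx, hy, mul_add]

lemma aux_mul'_map_right (z : A) (t : A ⊗[k] A) :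
    LinearMap.mul' k A ((TensorProduct.map LinearMap.id (LinearMap.mulRight k z)) t) =
      LinearMap.mul' k A t * z := by
  induction t using TensorProduct.induction_on with
  | zero => simp
  | tmul x y => simp [mul_assoc]
  | add x y hx hy => simp [hx, hy, add_mul]

lemma aux_mul'_map_central (w : A) (hw : ∀ x : A, x * w = w * x) (t : A ⊗[k] A) :
    LinearMap.mul' k A ((TensorProduct.map LinearMap.id (LinearMap.mulLeft k w)) t) =
      w * LinearMap.mul' k A t := by
  induction t using TensorProduct.induction_on with
  | zero => simp
  | tmul x y =>
      simp only [TensorProduct.map_tmul, LinearMap.id_coe, id_eq, LinearMap.mulLeft_apply,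
        LinearMap.mul'_apply]
      rw [← mul_assoc, hw x, mul_assoc]
  | add x y hx hy => simp [hx, hy, mul_add]

lemma aux_swap1 (u z : A) (t : A ⊗[k] A) :
    (TensorProduct.map (LinearMap.mulRight k u) LinearMap.id)
      ((TensorProduct.map (LinearMap.mulLeft k z) LinearMap.id) t) =
    (TensorProduct.map (LinearMap.mulLeft k z) LinearMap.id)
      ((TensorProduct.map (LinearMap.mulRight k u) LinearMap.id) t) := by
  induction t using TensorProduct.induction_on with
  | zero => simp
  | tmul x y => simp [mul_assoc]
  | add x y hx hy => simp [hx, hy]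

lemma aux_swap2 (u z : A) (t : A ⊗[k] A) :
    (TensorProduct.map LinearMap.id (LinearMap.mulRight k z))
      ((TensorProduct.map (LinearMap.mulRight k u) LinearMap.id) t) =
    (TensorProduct.map (LinearMap.mulRight k u) LinearMap.id)
      ((TensorProduct.map LinearMap.id (LinearMap.mulRight k z)) t) := by
  induction t using TensorProduct.induction_on with
  | zero => simp
  | tmul x y => simp
  | add x y hx hy => simp [hx, hy]

end Aux

/-- The product `a • b := Σ_{(a)} a'' a' b` built from the coproduct `δ`. -/
noncomputable def frobBullet {k A : Type} [Field k] [Ring A] [Algebra k A]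
    (δ : A →ₗ[k] A ⊗[k] A) (a b : A) : A :=
  LinearMap.mul' k A ((TensorProduct.comm k A A) (δ a)) * b

/-- for an (ungraded) algebra `A` with a coassociative coproduct `δ`
which is a map of `A`-bimodules and whose value on `1` is symmetric under the flip,
the product `a • b := Σ_{(a)} a'' a' b` on `A` (modelling length-zero Hochschild
chains) is associative. -/
theorem frobBullet_assoc {k A : Type} [Field k] [Ring A] [Algebra k A]
    (δ : A →ₗ[k] A ⊗[k] A)
    (hcoassoc : ∀ x : A,
      (TensorProduct.assoc k A A A) ((TensorProduct.map δ LinearMap.id) (δ x)) =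
        (TensorProduct.map LinearMap.id δ) (δ x))
    (hright : ∀ x y : A,
      δ (x * y) = (TensorProduct.map LinearMap.id (LinearMap.mulRight k y)) (δ x))
    (hleft : ∀ x y : A,
      δ (x * y) = (TensorProduct.map (LinearMap.mulLeft k x) LinearMap.id) (δ y))
    (hsymm : (TensorProduct.comm k A A) (δ 1) = δ 1) :
    ∀ a b c : A, frobBullet δ (frobBullet δ a b) c = frobBullet δ a (frobBullet δ b c) := by
  set e : A ⊗[k] A := δ 1 with he
  -- δ z expressed two ways via the bimodule property
  have hA : ∀ z : A, δ z = (TensorProduct.map (LinearMap.mulLeft k z) LinearMap.id) e := by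
    intro z; rw [← hleft z 1, mul_one]
  have hB : ∀ z : A, δ z = (TensorProduct.map LinearMap.id (LinearMap.mulRight k z)) e := by
    intro z; rw [← hright 1 z, one_mul]
  have hK : ∀ z : A, (TensorProduct.map (LinearMap.mulLeft k z) LinearMap.id) e =
      (TensorProduct.map LinearMap.id (LinearMap.mulRight k z)) e := by
    intro z; rw [← hA, ← hB]
  -- the "capping" map  M u = Σ e'' u e'
  set M : A → A := fun u => LinearMap.mul' k A ((TensorProduct.comm k A A) (δ u)) with hM
  have hMe : ∀ u : A, M u =
      LinearMap.mul' k A ((TensorProduct.map (LinearMap.mulRight k u) LinearMap.id) e) := by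
    intro u
    rw [hM]
    simp only
    rw [hB u, aux_comm_map, hsymm]
  -- M u is central
  have hcentral : ∀ u z : A, z * M u = M u * z := by
    intro u z
    rw [hMe u, ← aux_mul'_map_left, ← aux_swap1, hK, ← aux_swap2, aux_mul'_map_right]
  -- key multiplicativity: M (M a * b) = M a * M b
  have hkey : ∀ a b : A, M (M a * b) = M a * M b := by
    intro a b
    rw [hM]
    simp only
    rw [hleft (M a) b, aux_comm_map, aux_mul'_map_central (M a) (fun x => hcentral a x)]
  intro a b c
  show LinearMap.mul' k A ((TensorProduct.comm k A A) (δ (M a * b))) * c =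
    M a * (M b * c)
  have : LinearMap.mul' k A ((TensorProduct.comm k A A) (δ (M a * b))) = M (M a * b) := rfl
  rw [this, hkey, mul_assoc]
end

section
/- Let A be an ungraded symmetric open Frobenius algebra. For x = a[ ] and y = b[ ] length-zero Hochschild chains, the element K(x,y) := Σ_{(a)} a''[a'b] of C_1(A,A) satisfies d_1(K(x,y)) = Σ_{(a)} a''a'b − Σ_{(b)} b''b'a, where d_1 is the external Hochschild differential d_1(c_0[c_1]) = c_0c_1[ ] − c_1c_0[ ]. That is, the products x•y = Σ a''a'b and y•x = Σ b''b'a are homologous in degree 0 Hochschild homology. -/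
open TensorProduct

/-- in an ungraded symmetric open Frobenius algebra, for length-zero
Hochschild chains `x = a[ ]`, `y = b[ ]`, the degree-one chain
`K(x,y) = Σ_{(a)} a''[a'b]` satisfies
`d₁(K(x,y)) = Σ_{(a)} a''a'b − Σ_{(b)} b''b'a`, where
`d₁(c₀[c₁]) = c₀c₁ − c₁c₀`; i.e. the products `x•y` and `y•x` are homologous. -/
theorem bullet_comm_up_to_boundary {k A : Type} [Field k] [Ring A] [Algebra k A]
    (δ : A →ₗ[k] A ⊗[k] A)
    (hcoassoc : ∀ x : A,
      (TensorProduct.assoc k A A A) ((TensorProduct.map δ LinearMap.id) (δ x)) =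
        (TensorProduct.map LinearMap.id δ) (δ x))
    (hright : ∀ x y : A,
      δ (x * y) = (TensorProduct.map LinearMap.id (LinearMap.mulRight k y)) (δ x))
    (hleft : ∀ x y : A,
      δ (x * y) = (TensorProduct.map (LinearMap.mulLeft k x) LinearMap.id) (δ y))
    (hsymm : (TensorProduct.comm k A A) (δ 1) = δ 1) :
    ∀ a b : A,
      -- d₁(Σ_{(a)} a''[a'b]) = Σ_{(a)} a''·(a'b) − Σ_{(a)} (a'b)·a''
      LinearMap.mul' k A ((TensorProduct.comm k A A) (δ a)) * b -
        LinearMap.mul' k A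
          ((TensorProduct.map (LinearMap.mulRight k b) LinearMap.id) (δ a)) =
      -- x•y − y•x
      LinearMap.mul' k A ((TensorProduct.comm k A A) (δ a)) * b -
        LinearMap.mul' k A ((TensorProduct.comm k A A) (δ b)) * a := by
  intro a b
  have hδa : δ a = (TensorProduct.map LinearMap.id (LinearMap.mulRight k a)) (δ 1) := by
    have := hright 1 a; rwa [one_mul] at this
  have hδb : δ b = (TensorProduct.map (LinearMap.mulLeft k b) LinearMap.id) (δ 1) := by
    have := hleft b 1; rwa [mul_one] at this
  have hcomm : ∀ t : A ⊗[k] A,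
      (TensorProduct.comm k A A) ((TensorProduct.map (LinearMap.mulLeft k b) LinearMap.id) t) =
      (TensorProduct.map LinearMap.id (LinearMap.mulLeft k b)) ((TensorProduct.comm k A A) t) := by
    intro t
    induction t using TensorProduct.induction_on with
    | zero => simp
    | tmul x y => simp
    | add x y hx hy => simp [hx, hy]
  have key : LinearMap.mul' k A
      ((TensorProduct.map (LinearMap.mulRight k b) LinearMap.id) (δ a)) =
      LinearMap.mul' k A ((TensorProduct.comm k A A) (δ b)) * a := by
    rw [hδa, hδb, hcomm, hsymm]
    induction (δ 1) using TensorProduct.induction_on with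
    | zero => simp
    | tmul x y => simp [mul_assoc]
    | add x y hx hy =>
        simp only [map_add] at *
        rw [hx, hy, add_mul]
  rw [key]
end
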